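/- (Ky Fan inequality for products.) Let A : H1 → H2 and B : H2 → H3 be compact operators between Hilbert spaces. Then for all n, k ≥ 1: s_{n+k-1}(BA) ≤ s_n(A) · s_k(B). -/

import Mathlib

/-- The j-th singular value (approximation number) of an operator T between
Hilbert spaces: the infimum of ‖T - F‖ over operators F of rank < j. -/
noncomputable def sv {H1 H2 : Type*}
    [NormedAddCommGroup H1] [InnerProductSpace ℂ H1] [CompleteSpace H1]
    [NormedAddCommGroup H2] [InnerProductSpace ℂ H2] [CompleteSpace H2]
    (T : H1 →L[ℂ] H2) (j : ℕ) : ℝ :=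
  sInf {r : ℝ | ∃ F : H1 →L[ℂ] H2,
    ∃ _ : FiniteDimensional ℂ (LinearMap.range (F : H1 →ₗ[ℂ] H2)),
      Module.finrank ℂ (LinearMap.range (F : H1 →ₗ[ℂ] H2)) < j ∧ r = ‖T - F‖}

private lemma le_mul_sInf_aux {x c : ℝ} {S : Set ℝ} (hS : S.Nonempty) (hc : 0 ≤ c)
    (h : ∀ s ∈ S, x ≤ c * s) : x ≤ c * sInf S := by
  rw [← smul_eq_mul, ← Real.sInf_smul_of_nonneg hc]
  refine le_csInf (hS.smul_set) ?_
  rintro b ⟨s, hs, rfl⟩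
  simpa [smul_eq_mul] using h s hs

private lemma sv_le_aux {H1 H2 : Type*}
    [NormedAddCommGroup H1] [InnerProductSpace ℂ H1] [CompleteSpace H1]
    [NormedAddCommGroup H2] [InnerProductSpace ℂ H2] [CompleteSpace H2]
    (T F : H1 →L[ℂ] H2) (j : ℕ) [inst : FiniteDimensional ℂ (LinearMap.range (F : H1 →ₗ[ℂ] H2))]
    (h : Module.finrank ℂ (LinearMap.range (F : H1 →ₗ[ℂ] H2)) < j) : sv T j ≤ ‖T - F‖ := by
  refine csInf_le ⟨0, ?_⟩ ⟨F, inst, h, rfl⟩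
  rintro r ⟨F', _, _, rfl⟩
  exact norm_nonneg _

/-- Ky Fan inequality for products: s_{n+k-1}(BA) ≤ s_n(A) · s_k(B) for compact
operators A : H1 → H2 and B : H2 → H3 between Hilbert spaces. -/
theorem ky_fan_product
    {H1 H2 H3 : Type*}
    [NormedAddCommGroup H1] [InnerProductSpace ℂ H1] [CompleteSpace H1]
    [NormedAddCommGroup H2] [InnerProductSpace ℂ H2] [CompleteSpace H2]
    [NormedAddCommGroup H3] [InnerProductSpace ℂ H3] [CompleteSpace H3]
    (A : H1 →L[ℂ] H2) (B : H2 →L[ℂ] H3)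
    (hA : IsCompactOperator (⇑A)) (hB : IsCompactOperator (⇑B))
    (n k : ℕ) (hn : 1 ≤ n) (hk : 1 ≤ k) :
    sv (B.comp A) (n + k - 1) ≤ sv A n * sv B k := by
  classical
  set SA := {r : ℝ | ∃ F : H1 →L[ℂ] H2,
    ∃ _ : FiniteDimensional ℂ (LinearMap.range (F : H1 →ₗ[ℂ] H2)),
      Module.finrank ℂ (LinearMap.range (F : H1 →ₗ[ℂ] H2)) < n ∧ r = ‖A - F‖} with hSA
  set SB := {r : ℝ | ∃ G : H2 →L[ℂ] H3,
    ∃ _ : FiniteDimensional ℂ (LinearMap.range (G : H2 →ₗ[ℂ] H3)),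
      Module.finrank ℂ (LinearMap.range (G : H2 →ₗ[ℂ] H3)) < k ∧ r = ‖B - G‖} with hSB
  -- nonemptiness of the two sets (witness F = 0)
  have hbot1 : LinearMap.range ((0 : H1 →L[ℂ] H2) : H1 →ₗ[ℂ] H2) = ⊥ := by
    ext x; simp [LinearMap.mem_range, eq_comm]
  have hbot2 : LinearMap.range ((0 : H2 →L[ℂ] H3) : H2 →ₗ[ℂ] H3) = ⊥ := by
    ext x; simp [LinearMap.mem_range, eq_comm]
  have hSAne : SA.Nonempty := by
    refine ⟨‖A - 0‖, 0, ?_, ?_, rfl⟩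
    · rw [hbot1]; infer_instance
    · rw [hbot1]; simpa using Nat.lt_of_succ_le hn
  have hSBne : SB.Nonempty := by
    refine ⟨‖B - 0‖, 0, ?_, ?_, rfl⟩
    · rw [hbot2]; infer_instance
    · rw [hbot2]; simpa using Nat.lt_of_succ_le hk
  -- key pointwise estimate
  have key : ∀ b ∈ SB, ∀ a ∈ SA, sv (B.comp A) (n + k - 1) ≤ b * a := by
    rintro b ⟨G, instG, hG, rfl⟩ a ⟨F, instF, hF, rfl⟩
    set F' : H1 →L[ℂ] H3 := B.comp F + G.comp (A - F) with hF'
    have hEq : B.comp A - F' = (B - G).comp (A - F) := by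
      ext x
      simp [F', ContinuousLinearMap.comp_apply, map_sub]
      abel
    have hle : LinearMap.range (F' : H1 →ₗ[ℂ] H3) ≤
        (LinearMap.range (F : H1 →ₗ[ℂ] H2)).map (B : H2 →ₗ[ℂ] H3) ⊔ LinearMap.range (G : H2 →ₗ[ℂ] H3) := by
      rintro y ⟨x, rfl⟩
      refine Submodule.mem_sup.2 ⟨B (F x), ⟨F x, ⟨x, rfl⟩, rfl⟩,
        G ((A - F) x), ⟨(A - F) x, rfl⟩, ?_⟩
      simp [F']
    haveI : FiniteDimensional ℂ ((LinearMap.range (F : H1 →ₗ[ℂ] H2)).map (B : H2 →ₗ[ℂ] H3)) := by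
      infer_instance
    haveI : FiniteDimensional ℂ
        ((LinearMap.range (F : H1 →ₗ[ℂ] H2)).map (B : H2 →ₗ[ℂ] H3) ⊔ LinearMap.range (G : H2 →ₗ[ℂ] H3) :
          Submodule ℂ H3) := by
      infer_instance
    haveI instF' : FiniteDimensional ℂ (LinearMap.range (F' : H1 →ₗ[ℂ] H3)) :=
      Submodule.finiteDimensional_of_le hle
    have hrank : Module.finrank ℂ (LinearMap.range (F' : H1 →ₗ[ℂ] H3)) < n + k - 1 := by
      have h1 : Module.finrank ℂ (LinearMap.range (F' : H1 →ₗ[ℂ] H3)) ≤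
          Module.finrank ℂ
            ((LinearMap.range (F : H1 →ₗ[ℂ] H2)).map (B : H2 →ₗ[ℂ] H3) ⊔ LinearMap.range (G : H2 →ₗ[ℂ] H3) :
              Submodule ℂ H3) :=
        Submodule.finrank_mono hle
      have h2 := Submodule.finrank_add_le_finrank_add_finrank
        ((LinearMap.range (F : H1 →ₗ[ℂ] H2)).map (B : H2 →ₗ[ℂ] H3)) (LinearMap.range (G : H2 →ₗ[ℂ] H3))
      have h3 := Submodule.finrank_map_le (B : H2 →ₗ[ℂ] H3) (LinearMap.range (F : H1 →ₗ[ℂ] H2))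
      omega
    calc sv (B.comp A) (n + k - 1) ≤ ‖B.comp A - F'‖ := sv_le_aux _ _ _ hrank
      _ = ‖(B - G).comp (A - F)‖ := by rw [hEq]
      _ ≤ ‖B - G‖ * ‖A - F‖ := ContinuousLinearMap.opNorm_comp_le _ _
  -- now pass to infima
  have step1 : ∀ b ∈ SB, sv (B.comp A) (n + k - 1) ≤ b * sv A n := by
    rintro b hb
    obtain ⟨G, _, _, rfl⟩ := hb
    exact le_mul_sInf_aux hSAne (norm_nonneg _) (key _ ⟨G, ‹_›, ‹_›, rfl⟩)
  have hAnn : 0 ≤ sv A n := Real.sInf_nonneg (by rintro r ⟨F, _, _, rfl⟩; exact norm_nonneg _)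
  have hfin := le_mul_sInf_aux (x := sv (B.comp A) (n + k - 1)) hSBne hAnn
    (fun b hb => by rw [mul_comm]; exact step1 b hb)
  have hb' : sv B k = sInf SB := rfl
  rw [hb']
  exact hfin
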